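/- Let S = R[x_1,...,x_r] be a graded polynomial ring over a Noetherian local ring R, acting on an ℕ-graded S-module T = ⊕_{i≥0} T_i with each x_j homogeneous of the same positive degree d. If T is a Noetherian S-module, then the sequence of annihilator ideals {ann_R(T_i)} is eventually periodic of period dividing d: there exists n_0 such that ann_R(T_i) = ann_R(T_{i+d}) for all i ≥ n_0. -/

import Mathlib

open MvPolynomial
open DirectSum

/-- Let `S = R[x_1,…,x_r]` be a polynomial ring over a Noetherian local ring `R`, acting on an
`ℕ`-graded `S`-module `T = ⊕ T_i` with each `x_j` homogeneous of the same positive degree `d`.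
If `T` is a Noetherian `S`-module then the annihilators `ann_R(T_i)` are eventually periodic of
period dividing `d`:  `ann_R(T_i) = ann_R(T_{i+d})` for all large `i`. -/
theorem stmt4 (R : Type) [CommRing R] [IsNoetherianRing R] [IsLocalRing R]
    (r : ℕ) (d : ℕ) (hd : 0 < d)
    (T : Type) [AddCommGroup T]
    [Module (MvPolynomial (Fin r) R) T] [Module R T]
    [IsScalarTower R (MvPolynomial (Fin r) R) T]
    (𝒯 : ℕ → Submodule R T)
    (hinternal : DirectSum.IsInternal 𝒯)
    (hx : ∀ (j : Fin r) (i : ℕ), ∀ v ∈ 𝒯 i,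
      (X j : MvPolynomial (Fin r) R) • v ∈ 𝒯 (i + d))
    (hNoeth : IsNoetherian (MvPolynomial (Fin r) R) T) :
    ∃ n₀ : ℕ, ∀ i : ℕ, n₀ ≤ i →
      Module.annihilator R (𝒯 i) = Module.annihilator R (𝒯 (i + d)) := by
  classical
  set S := MvPolynomial (Fin r) R with hS
  have hcomm : ∀ (a : R) (s : S) (v : T), a • (s • v) = s • (a • v) := fun a s v =>
    smul_comm a s v
  -- the equivalence and projections
  set e : (⨁ i, 𝒯 i) ≃ₗ[R] T :=
    LinearEquiv.ofBijective (DirectSum.coeLinearMap 𝒯) hinternal with he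
  set π : ℕ → T → T := fun i v => ((e.symm v) i : T) with hπ
  have hπ_mem : ∀ i v, π i v ∈ 𝒯 i := fun i v => ((e.symm v) i).2
  have hπ_same : ∀ i v, v ∈ 𝒯 i → π i v = v := by
    intro i v hv
    simp only [hπ]
    rw [hinternal.ofBijective_coeLinearMap_of_mem hv]
  have hπ_ne : ∀ i j v, v ∈ 𝒯 j → j ≠ i → π i v = 0 := by
    intro i j v hv hij
    simp only [hπ]
    rw [hinternal.ofBijective_coeLinearMap_of_mem_ne hij hv]
    rfl
  have hπ_add : ∀ i v w, π i (v + w) = π i v + π i w := by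
    intro i v w; simp [hπ]
  have hπ_rsmul : ∀ i (a : R) v, π i (a • v) = a • π i v := by
    intro i a v; simp [hπ, DirectSum.smul_apply]
  have hπ_zero : ∀ i, π i (0 : T) = 0 := by intro i; simp [hπ]
  have htop : ∀ v : T, v ∈ ⨆ i, 𝒯 i := by
    intro v; rw [hinternal.submodule_iSup_eq_top]; trivial
  -- shift property of projections
  have hshift : ∀ (j : Fin r) (m : ℕ) (v : T),
      π (m + d) ((X j : S) • v) = (X j : S) • π m v := by
    intro j m v
    refine Submodule.iSup_induction (motive := fun w => π (m + d) ((X j : S) • w) = (X j : S) • π m w)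
      𝒯 (htop v) ?_ ?_ ?_
    · intro i w hw
      show π (m + d) ((X j : S) • w) = (X j : S) • π m w
      by_cases him : i = m
      · subst him
        rw [hπ_same (i + d) _ (hx j i w hw), hπ_same i w hw]
      · rw [hπ_ne (m + d) (i + d) _ (hx j i w hw) (by omega),
          hπ_ne m i w hw him, smul_zero]
    · show π (m + d) ((X j : S) • (0 : T)) = (X j : S) • π m 0
      rw [smul_zero, hπ_zero, hπ_zero, smul_zero]
    · intro w₁ w₂ h1 h2
      show π (m + d) ((X j : S) • (w₁ + w₂)) = (X j : S) • π m (w₁ + w₂)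
      rw [smul_add, hπ_add, h1, h2, hπ_add, smul_add]
  -- the filtration by spans of low-degree pieces
  have Pmono : Monotone (fun n => Submodule.span S (⋃ i ∈ Set.Iio n, (𝒯 i : Set T))) := by
    intro n m hnm
    apply Submodule.span_mono
    exact Set.biUnion_subset_biUnion_left (fun i hi => lt_of_lt_of_le hi hnm)
  set P : ℕ →o Submodule S T := ⟨_, Pmono⟩ with hP
  obtain ⟨N, hN⟩ := monotone_stabilizes_iff_noetherian.mpr hNoeth P
  have hPtop : ∀ v : T, v ∈ P N := by
    intro v
    have hv : v ∈ ⨆ n, P n := by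
      refine Submodule.iSup_induction (motive := fun w => w ∈ ⨆ n, P n) 𝒯 (htop v) ?_ ?_ ?_
      · intro i w hw
        have h1 : w ∈ P (i + 1) := by
          apply Submodule.subset_span
          exact Set.mem_biUnion (Nat.lt_succ_self i) hw
        exact Submodule.mem_iSup_of_mem (i + 1) h1
      · exact Submodule.zero_mem _
      · intro w₁ w₂ h1 h2; exact Submodule.add_mem _ h1 h2
    rw [Submodule.mem_iSup_of_chain] at hv
    obtain ⟨kk, hkk⟩ := hv
    have h2 := hN (max N kk) (le_max_left _ _)
    have hk' : P kk ≤ P (max N kk) := P.monotone (le_max_right _ _)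
    rw [← h2] at hk'
    exact hk' hkk
  -- key (Kirby) step
  have key : ∀ m, N ≤ m → ∀ a : R, (∀ v ∈ 𝒯 m, a • v = 0) → ∀ v ∈ 𝒯 (m + d), a • v = 0 := by
    intro m hm a ha v hv
    have hXstep : ∀ (j : Fin r) (w : T), a • π (m + d) ((X j : S) • w) = 0 := by
      intro j w
      rw [hshift j m w, hcomm, ha (π m w) (hπ_mem m w), smul_zero]
    have hsmul : ∀ (s : S) (w : T), a • π (m + d) w = 0 → a • π (m + d) (s • w) = 0 := by
      intro s
      induction s using MvPolynomial.induction_on with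
      | C c =>
        intro w hw
        rw [show ((C c : S) • w) = c • w from algebraMap_smul S c w, hπ_rsmul,
          smul_comm, hw, smul_zero]
      | add p q hp hq =>
        intro w hw
        rw [add_smul, hπ_add, smul_add, hp w hw, hq w hw, add_zero]
      | mul_X p j hp =>
        intro w _
        rw [mul_smul]
        exact hp _ (hXstep j w)
    have hall : ∀ w : T, w ∈ P N → a • π (m + d) w = 0 := by
      intro w hw
      refine Submodule.span_induction ?_ ?_ ?_ ?_ hw
      · intro y hy
        obtain ⟨i, hi, hyi⟩ := Set.mem_iUnion₂.mp hy
        rw [hπ_ne (m + d) i y hyi (by simp only [Set.mem_Iio] at hi; omega), smul_zero]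
      · rw [hπ_zero, smul_zero]
      · intro y z _ _ h1 h2
        rw [hπ_add, smul_add, h1, h2, add_zero]
      · intro sc y _ h1
        exact hsmul sc y h1
    have h := hall v (hPtop v)
    rwa [hπ_same (m + d) v hv] at h
  -- annihilator membership criterion
  have hann : ∀ (i : ℕ) (a : R),
      a ∈ Module.annihilator R (𝒯 i) ↔ ∀ v ∈ 𝒯 i, a • v = 0 := by
    intro i a
    rw [Module.mem_annihilator]
    constructor
    · intro h v hv
      have h2 := h ⟨v, hv⟩
      rwa [Subtype.ext_iff] at h2
    · intro h m
      exact Subtype.ext (h m m.2)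
  have hmono : ∀ m, N ≤ m →
      Module.annihilator R (𝒯 m) ≤ Module.annihilator R (𝒯 (m + d)) := by
    intro m hm a ha
    rw [hann] at ha ⊢
    exact key m hm a ha
  -- chains along residue classes
  have hres : ∀ s : ℕ, ∃ k : ℕ, ∀ n, k ≤ n →
      Module.annihilator R (𝒯 (N + s + d * k)) = Module.annihilator R (𝒯 (N + s + d * n)) := by
    intro s
    have mono' : Monotone (fun n => Module.annihilator R (𝒯 (N + s + d * n))) := by
      apply monotone_nat_of_le_succ
      intro n
      have h1 := hmono (N + s + d * n) (by omega)
      have heq : N + s + d * n + d = N + s + d * (n + 1) := by ring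
      rwa [heq] at h1
    obtain ⟨k, hk⟩ := monotone_stabilizes_iff_noetherian.mpr
      (inferInstance : IsNoetherian R R) ⟨_, mono'⟩
    exact ⟨k, fun n hn => hk n hn⟩
  choose k hk using hres
  refine ⟨N + d * ((Finset.range d).sup k), ?_⟩
  intro i hi
  set K := (Finset.range d).sup k with hK
  set s := (i - N) % d with hs
  set n := (i - N) / d with hn2
  have hsd : s < d := Nat.mod_lt _ hd
  have hdm : d * n + s = i - N := Nat.div_add_mod (i - N) d
  have hiN : N ≤ i := by omega
  have hi_eq : i = N + s + d * n := by omega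
  have hnK : K ≤ n := by
    have h1 : K * d ≤ i - N := by rw [mul_comm]; omega
    exact (Nat.le_div_iff_mul_le hd).mpr h1
  have hkn : k s ≤ n := le_trans (Finset.le_sup (Finset.mem_range.mpr hsd)) hnK
  have h1 := hk s n hkn
  have h2 := hk s (n + 1) (by omega)
  have hmul : d * (n + 1) = d * n + d := by ring
  have hi_eq2 : i + d = N + s + d * (n + 1) := by omega
  rw [hi_eq2, hi_eq, ← h1, h2]
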